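/- A ring R is semisimple if and only if the countable direct sum R^(ℕ) of copies of R, as a right R-module, has the SSP (the sum of any two direct summands is a direct summand). -/

import Mathlib

def IsSummand {R M : Type*} [Ring R] [AddCommGroup M] [Module R M]
    (p : Submodule R M) : Prop :=
  ∃ q : Submodule R M, IsCompl p q

section General

open Submodule LinearMap

variable {A : Type*} [Ring A] {M N W : Type*} [AddCommGroup M] [Module A M]
  [AddCommGroup N] [Module A N] [AddCommGroup W] [Module A W]

/-- The sum of summands property. -/
def HasSSP (A M : Type*) [Ring A] [AddCommGroup M] [Module A M] : Prop :=
  ∀ p q : Submodule A M, IsSummand p → IsSummand q → IsSummand (p ⊔ q)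

lemma isSummand_map_iff (e : M ≃ₗ[A] N) {p : Submodule A M} :
    IsSummand (p.map (e : M →ₗ[A] N)) ↔ IsSummand p := by
  constructor
  · rintro ⟨q, hq⟩
    refine ⟨q.comap (e : M →ₗ[A] N), ?_⟩
    have h2 := (Submodule.orderIsoMapComap e).symm.isCompl hq
    have e1 : (Submodule.orderIsoMapComap e).symm (p.map (e : M →ₗ[A] N)) = p :=
      Submodule.comap_map_eq_of_injective e.injective p
    rwa [e1] at h2
  · rintro ⟨q, hq⟩
    exact ⟨q.map (e : M →ₗ[A] N), (Submodule.orderIsoMapComap e).isCompl hq⟩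

lemma hasSSP_congr (e : M ≃ₗ[A] N) (H : HasSSP A M) : HasSSP A N := by
  intro p q hp hq
  have h := H (p.map (e.symm : N →ₗ[A] M)) (q.map (e.symm : N →ₗ[A] M))
    ((isSummand_map_iff e.symm).2 hp) ((isSummand_map_iff e.symm).2 hq)
  rw [← Submodule.map_sup] at h
  exact (isSummand_map_iff e.symm).1 h

lemma summand_of_disjoint {p S : Submodule A M} (hd : p ⊓ S = ⊥)
    (h : IsSummand (p ⊔ S)) : IsSummand S := by
  obtain ⟨c, hc⟩ := h
  refine ⟨p ⊔ c, IsCompl.of_eq ?_ ?_⟩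
  · rw [eq_bot_iff]
    rintro x hx
    obtain ⟨hxS, hxpc⟩ := Submodule.mem_inf.mp hx
    rw [Submodule.mem_sup] at hxpc
    obtain ⟨y, hy, z, hz, rfl⟩ := hxpc
    have hzps : z ∈ (p ⊔ S) ⊓ c :=
      ⟨by
        have : y + z - y ∈ p ⊔ S := sub_mem (le_sup_right (α := Submodule A M) hxS)
          (le_sup_left (α := Submodule A M) hy)
        simpa using this, hz⟩
    rw [disjoint_iff.mp hc.disjoint, Submodule.mem_bot] at hzps
    subst hzps
    have h3 : y + 0 ∈ p ⊓ S := ⟨by simpa using hy, hxS⟩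
    rw [hd] at h3
    simpa using h3
  · rw [← sup_assoc, sup_comm S p, codisjoint_iff.mp hc.codisjoint]

lemma summand_of_map_summand (ι : W →ₗ[A] M) (hι : Function.Injective ι)
    {u : Submodule A W} (hs : IsSummand (u.map ι)) : IsSummand u := by
  obtain ⟨D, hD⟩ := hs
  have hsr : u.map ι ≤ LinearMap.range ι := Submodule.map_le_iff_le_comap.2
    (fun x _ => ⟨x, rfl⟩)
  have hst : u.map ι ⊔ (D ⊓ LinearMap.range ι) = LinearMap.range ι := by
    rw [← sup_inf_assoc_of_le _ hsr, codisjoint_iff.mp hD.codisjoint, top_inf_eq]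
  have hinf : u.map ι ⊓ (D ⊓ LinearMap.range ι) = ⊥ := by
    have h1 : u.map ι ⊓ (D ⊓ LinearMap.range ι) ≤ u.map ι ⊓ D :=
      inf_le_inf_left _ inf_le_left
    rw [disjoint_iff.mp hD.disjoint] at h1
    exact le_bot_iff.mp h1
  refine ⟨(D ⊓ LinearMap.range ι).comap ι, IsCompl.of_eq ?_ ?_⟩
  · rw [eq_bot_iff]
    rintro x hx
    obtain ⟨hxu, hxc⟩ := Submodule.mem_inf.mp hx
    have : ι x ∈ u.map ι ⊓ (D ⊓ LinearMap.range ι) := ⟨Submodule.mem_map_of_mem hxu, hxc⟩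
    rw [hinf, Submodule.mem_bot] at this
    rw [Submodule.mem_bot]
    exact hι (by simpa using this)
  · rw [eq_top_iff]
    intro x _
    have hx : ι x ∈ u.map ι ⊔ (D ⊓ LinearMap.range ι) := by
      rw [hst]; exact LinearMap.mem_range_self ι x
    rw [Submodule.mem_sup] at hx
    obtain ⟨a, ha, b, hb, hab⟩ := hx
    obtain ⟨a', ha', rfl⟩ := ha
    obtain ⟨b', rfl⟩ := hb.2
    have : x = a' + b' := hι (by rw [map_add, hab])
    subst this
    exact Submodule.add_mem _ (Submodule.mem_sup_left ha')
      (Submodule.mem_sup_right (by simpa using hb))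

lemma graph_summand (H : HasSSP A M) {p q : Submodule A M} (h : IsCompl p q)
    (f : M →ₗ[A] M) (hf : p.map f ≤ q) : IsSummand (p ⊔ p.map f) := by
  set G := p.map (LinearMap.id + f : M →ₗ[A] M) with hGdef
  have hGq : IsCompl G q := by
    refine IsCompl.of_eq ?_ ?_
    · rw [eq_bot_iff]
      rintro x hx
      obtain ⟨hxG, hxq⟩ := Submodule.mem_inf.mp hx
      obtain ⟨y, hy, rfl⟩ := hxG
      have hfy : f y ∈ q := hf (Submodule.mem_map_of_mem hy)
      have : y ∈ p ⊓ q := ⟨hy, by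
        have : ((LinearMap.id + f : M →ₗ[A] M)) y - f y ∈ q := sub_mem hxq hfy
        simpa using this⟩
      rw [disjoint_iff.mp h.disjoint, Submodule.mem_bot] at this
      subst this
      simp
    · rw [eq_top_iff, ← codisjoint_iff.mp h.codisjoint]
      refine sup_le ?_ le_sup_right
      intro y hy
      have h1 : ((LinearMap.id + f : M →ₗ[A] M)) y ∈ G := Submodule.mem_map_of_mem hy
      have h2 : f y ∈ q := hf (Submodule.mem_map_of_mem hy)
      have : ((LinearMap.id + f : M →ₗ[A] M)) y - f y ∈ G ⊔ q :=
        sub_mem (Submodule.mem_sup_left h1) (Submodule.mem_sup_right h2)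
      simpa using this
  have hsup : p ⊔ G = p ⊔ p.map f := by
    refine le_antisymm (sup_le le_sup_left ?_) (sup_le le_sup_left ?_)
    · rintro _ ⟨y, hy, rfl⟩
      have : ((LinearMap.id + f : M →ₗ[A] M)) y = y + f y := rfl
      rw [this]
      exact add_mem (Submodule.mem_sup_left hy)
        (Submodule.mem_sup_right (Submodule.mem_map_of_mem hy))
    · rintro _ ⟨y, hy, rfl⟩
      have h1 : ((LinearMap.id + f : M →ₗ[A] M)) y ∈ G := Submodule.mem_map_of_mem hy
      have : ((LinearMap.id + f : M →ₗ[A] M)) y - y ∈ p ⊔ G :=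
        sub_mem (Submodule.mem_sup_right h1) (Submodule.mem_sup_left hy)
      simpa using this
  rw [← hsup]
  exact H p G ⟨q, h⟩ ⟨q, hGq⟩

end General

section Core

open Submodule LinearMap

variable {A : Type*} [Ring A]

lemma range_summand (H : HasSSP A (ℕ →₀ A)) (f : (ℕ →₀ A) →ₗ[A] (ℕ →₀ A)) :
    IsSummand (LinearMap.range f) := by
  set M := ℕ →₀ A with hM
  let e : ((ℕ ⊕ ℕ) →₀ A) ≃ₗ[A] M × M := Finsupp.sumFinsuppLEquivProdFinsupp A
  let e' : ((ℕ ⊕ ℕ) →₀ A) ≃ₗ[A] M := Finsupp.domLCongr Equiv.natSumNatEquivNat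
  have H2 : HasSSP A (M × M) := hasSSP_congr (e'.symm.trans e) H
  set p := range (inl A M M) with hp
  set q := range (inr A M M) with hq
  have hpq : IsCompl p q := isCompl_range_inl_inr
  set F : M × M →ₗ[A] M × M := (inr A M M) ∘ₗ f ∘ₗ (fst A M M) with hF
  have hcomp : F ∘ₗ (inl A M M) = (inr A M M) ∘ₗ f := by
    apply LinearMap.ext
    intro u
    simp [hF]
  have hmap : p.map F = (range f).map (inr A M M) := by
    rw [hp, ← range_comp, hcomp, range_comp]
  have hle : p.map F ≤ q := by
    rw [hmap]
    rintro _ ⟨y, hy, rfl⟩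
    exact mem_range_self _ _
  have h1 : IsSummand (p ⊔ (range f).map (inr A M M)) := by
    rw [← hmap]
    exact graph_summand H2 hpq F hle
  have hd : p ⊓ (range f).map (inr A M M) = ⊥ := by
    have h2 : p ⊓ (range f).map (inr A M M) ≤ p ⊓ q := by
      refine inf_le_inf_left _ ?_
      rintro _ ⟨y, hy, rfl⟩
      exact mem_range_self _ _
    rw [disjoint_iff.mp hpq.disjoint] at h2
    exact le_bot_iff.mp h2
  exact summand_of_map_summand (inr A M M) (inr_injective)
    (summand_of_disjoint hd h1)

lemma span_range_summand (H : HasSSP A (ℕ →₀ A)) (g : ℕ → (ℕ →₀ A)) :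
    IsSummand (span A (Set.range g)) := by
  rw [← Finsupp.range_linearCombination]
  exact range_summand H _

lemma ideal_span_range_summand (H : HasSSP A (ℕ →₀ A)) (g : ℕ → A) :
    IsSummand (span A (Set.range g) : Submodule A A) := by
  have hinj : Function.Injective (Finsupp.lsingle (R := A) (M := A) 0) := by
    intro x y h
    simpa using congrArg (fun v => v 0) h
  refine summand_of_map_summand (Finsupp.lsingle 0) hinj ?_
  rw [Submodule.map_span, ← Set.range_comp]
  exact span_range_summand H _

lemma cyclic_of_summand {J : Submodule A A} (h : IsSummand J) :
    ∃ j, J = span A {j} := by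
  obtain ⟨K, hK⟩ := h
  have h1 : (1 : A) ∈ J ⊔ K := by
    rw [codisjoint_iff.mp hK.codisjoint]; trivial
  rw [Submodule.mem_sup] at h1
  obtain ⟨j, hj, k, hk, hjk⟩ := h1
  refine ⟨j, le_antisymm ?_ ((span_le).2 (Set.singleton_subset_iff.2 hj))⟩
  intro x hx
  have hxj : x * j ∈ J := by
    simpa [smul_eq_mul] using J.smul_mem x hj
  have hxk : x * k ∈ J ⊓ K := by
    refine ⟨?_, by simpa [smul_eq_mul] using K.smul_mem x hk⟩
    have hsum : x * j + x * k = x := by rw [← mul_add, hjk, mul_one]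
    rw [eq_sub_of_add_eq' hsum]
    exact sub_mem hx hxj
  rw [disjoint_iff.mp hK.disjoint, Submodule.mem_bot] at hxk
  have hxx : x = x * j := by
    have hsum : x * j + x * k = x := by rw [← mul_add, hjk, mul_one]
    rw [hxk, add_zero] at hsum
    exact hsum.symm
  rw [Submodule.mem_span_singleton]
  exact ⟨x, by rw [smul_eq_mul, ← hxx]⟩

lemma finset_cg (s : Finset A) :
    ∃ g : ℕ → A, span A (s : Set A) = span A (Set.range g) := by
  classical
  induction s using Finset.induction_on with
  | empty =>
    refine ⟨fun _ => 0, ?_⟩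
    rw [Finset.coe_empty, Submodule.span_empty, Set.range_const,
      Submodule.span_zero_singleton]
  | @insert a s ha ih =>
    obtain ⟨g, hg⟩ := ih
    refine ⟨fun n => Nat.rec a (fun m _ => g m) n, ?_⟩
    have hr : Set.range (fun n => Nat.rec a (fun m _ => g m) n : ℕ → A)
        = insert a (Set.range g) := by
      ext y
      constructor
      · rintro ⟨n, rfl⟩
        cases n with
        | zero => exact Set.mem_insert _ _
        | succ m => exact Set.mem_insert_of_mem _ (Set.mem_range_self m)
      · rintro (rfl | ⟨m, rfl⟩)
        · exact ⟨0, rfl⟩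
        · exact ⟨m + 1, rfl⟩
    rw [Finset.coe_insert, Submodule.span_insert, hr, Submodule.span_insert, hg]

lemma ideal_cg (hcyc : ∀ g : ℕ → A, ∃ j, span A (Set.range g) = span A ({j} : Set A))
    (I : Submodule A A) : ∃ g : ℕ → A, I = span A (Set.range g) := by
  classical
  by_contra hI
  have key : ∀ s : Finset A, (s : Set A) ⊆ (I : Set A) →
      ∃ x, x ∈ I ∧ x ∉ span A (s : Set A) := by
    intro s hs
    by_contra hc
    push_neg at hc
    have heq : I = span A (s : Set A) := le_antisymm hc (span_le.2 hs)
    obtain ⟨g, hg⟩ := finset_cg s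
    exact hI ⟨g, heq.trans hg⟩
  choose pick hpI hpN using key
  let T : ℕ → {s : Finset A // (s : Set A) ⊆ (I : Set A)} := fun n => Nat.rec
    ⟨∅, by simp⟩
    (fun _ p => ⟨insert (pick p.1 p.2) p.1, by
      rw [Finset.coe_insert]
      exact Set.insert_subset (hpI p.1 p.2) p.2⟩) n
  set x : ℕ → A := fun n => pick (T n).1 (T n).2 with hx
  have hTsucc : ∀ n, (T (n + 1)).1 = insert (x n) (T n).1 := fun n => rfl
  have hmono : ∀ m n, m ≤ n → (T m).1 ⊆ (T n).1 := by
    intro m n h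
    induction n, h using Nat.le_induction with
    | base => exact subset_rfl
    | succ n hmn ih =>
      refine ih.trans ?_
      rw [hTsucc]
      exact Finset.subset_insert _ _
  have hxT : ∀ m n, m < n → x m ∈ (T n).1 := by
    intro m n h
    exact hmono (m + 1) n h (by rw [hTsucc]; exact Finset.mem_insert_self _ _)
  obtain ⟨j, hj⟩ := hcyc x
  have hjmem : j ∈ span A (Set.range x) := by
    rw [hj]; exact Submodule.mem_span_singleton_self j
  obtain ⟨t, hts, hjt⟩ := Submodule.mem_span_finite_of_mem_span hjmem
  have hidx : ∀ a ∈ t, ∃ i, x i = a := fun a ha => hts ha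
  choose idx hidxeq using hidx
  set Nb : ℕ := t.attach.sup (fun a => idx a.1 a.2 + 1) with hNb
  have htT : (t : Set A) ⊆ ((T Nb).1 : Set A) := by
    intro a ha
    have h1 : idx a ha + 1 ≤ Nb := Finset.le_sup (f := fun a => idx a.1 a.2 + 1)
      (Finset.mem_attach t ⟨a, ha⟩)
    have h2 := hxT (idx a ha) Nb h1
    rwa [hidxeq] at h2
  have hxNmem : x Nb ∈ span A ((T Nb).1 : Set A) := by
    have h1 : x Nb ∈ span A (Set.range x) := subset_span (Set.mem_range_self _)
    rw [hj] at h1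
    have h2 : span A ({j} : Set A) ≤ span A ((T Nb).1 : Set A) := by
      rw [span_le, Set.singleton_subset_iff]
      exact Submodule.span_mono htT hjt
    exact h2 h1
  exact hpN (T Nb).1 (T Nb).2 hxNmem

theorem core_semisimple (H : HasSSP A (ℕ →₀ A)) : IsSemisimpleRing A := by
  have hcg : ∀ g : ℕ → A, IsSummand (span A (Set.range g) : Submodule A A) :=
    ideal_span_range_summand H
  have hcyc : ∀ g : ℕ → A, ∃ j, span A (Set.range g) = span A ({j} : Set A) := by
    intro g
    exact cyclic_of_summand (hcg g)
  refine (isSemisimpleModule_iff A A).mpr ⟨fun I => ?_⟩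
  obtain ⟨g, hg⟩ := ideal_cg hcyc I
  rw [hg]
  exact hcg g

end Core

section Opp

open Submodule MulOpposite

variable {R : Type*} [Ring R]

lemma mem_rspan {a x : R} : x ∈ span Rᵐᵒᵖ ({a} : Set R) ↔ ∃ c : R, a * c = x := by
  rw [Submodule.mem_span_singleton]
  constructor
  · rintro ⟨c, rfl⟩
    exact ⟨c.unop, rfl⟩
  · rintro ⟨c, rfl⟩
    exact ⟨MulOpposite.op c, rfl⟩

lemma rspan_le {a : R} {J : Submodule Rᵐᵒᵖ R} (h : a ∈ J) :
    span Rᵐᵒᵖ ({a} : Set R) ≤ J :=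
  span_le.2 (Set.singleton_subset_iff.2 h)

lemma idem_summand {e : R} (he : e * e = e) :
    IsSummand (span Rᵐᵒᵖ ({e} : Set R)) := by
  refine ⟨span Rᵐᵒᵖ ({1 - e} : Set R), IsCompl.of_eq ?_ ?_⟩
  · rw [eq_bot_iff]
    rintro x hx
    obtain ⟨h1, h2⟩ := Submodule.mem_inf.mp hx
    obtain ⟨c, rfl⟩ := mem_rspan.mp h1
    obtain ⟨d, hd⟩ := mem_rspan.mp h2
    have h3 : e * (e * c) = e * c := by rw [← mul_assoc, he]
    have h4 : e * ((1 - e) * d) = 0 := by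
      rw [← mul_assoc, mul_sub, mul_one, he, sub_self, zero_mul]
    rw [Submodule.mem_bot, ← h3, ← hd, h4]
  · rw [eq_top_iff]
    intro x _
    have hx : x = e * x + (1 - e) * x := by
      rw [← add_mul, add_sub_cancel, one_mul]
    rw [hx]
    exact add_mem (Submodule.mem_sup_left (mem_rspan.mpr ⟨x, rfl⟩))
      (Submodule.mem_sup_right (mem_rspan.mpr ⟨x, rfl⟩))

lemma vnr_of_semisimple [IsSemisimpleRing R] (a : R) : ∃ x, a * x * a = a := by
  obtain ⟨K, hK⟩ := exists_isCompl (span R ({a} : Set R))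
  have h1 : (1 : R) ∈ span R ({a} : Set R) ⊔ K := by
    rw [codisjoint_iff.mp hK.codisjoint]; trivial
  rw [Submodule.mem_sup] at h1
  obtain ⟨y, hy, k, hk, hyk⟩ := h1
  obtain ⟨x, hxa⟩ := Submodule.mem_span_singleton.mp hy
  rw [smul_eq_mul] at hxa
  refine ⟨x, ?_⟩
  have h2 : a - a * x * a = a * k := by
    have h3 : a * (y + k) = a := by rw [hyk, mul_one]
    rw [mul_add, ← hxa, ← mul_assoc] at h3
    exact (eq_sub_of_add_eq' h3).symm
  have h4 : a - a * x * a ∈ span R ({a} : Set R) ⊓ K := by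
    constructor
    · refine sub_mem (Submodule.mem_span_singleton_self a) ?_
      exact Submodule.mem_span_singleton.mpr ⟨a * x, by rw [smul_eq_mul]⟩
    · rw [h2]
      simpa [smul_eq_mul] using K.smul_mem a hk
  rw [disjoint_iff.mp hK.disjoint, Submodule.mem_bot] at h4
  exact (sub_eq_zero.mp h4).symm

lemma principal_idem (hreg : ∀ a : R, ∃ x, a * x * a = a) (a : R) :
    ∃ e, e * e = e ∧ span Rᵐᵒᵖ ({a} : Set R) = span Rᵐᵒᵖ ({e} : Set R) := by
  obtain ⟨x, hx⟩ := hreg a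
  refine ⟨a * x, ?_, ?_⟩
  · rw [← mul_assoc, hx]
  · apply le_antisymm
    · refine rspan_le (mem_rspan.mpr ⟨a, ?_⟩)
      rw [mul_assoc a x a] at hx ⊢
      exact hx
    · exact rspan_le (mem_rspan.mpr ⟨x, rfl⟩)

lemma rsup_idem (hreg : ∀ a : R, ∃ x, a * x * a = a) {e f : R}
    (he : e * e = e) (hf : f * f = f) :
    ∃ k, k * k = k ∧
      span Rᵐᵒᵖ ({e} : Set R) ⊔ span Rᵐᵒᵖ ({f} : Set R) = span Rᵐᵒᵖ ({k} : Set R) := by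
  set g := f - e * f with hg
  have hstep : span Rᵐᵒᵖ ({e} : Set R) ⊔ span Rᵐᵒᵖ ({f} : Set R)
      = span Rᵐᵒᵖ ({e} : Set R) ⊔ span Rᵐᵒᵖ ({g} : Set R) := by
    apply le_antisymm
    · refine sup_le le_sup_left (rspan_le ?_)
      have hfe : f = e * f + g := by rw [hg]; abel
      rw [hfe]
      exact add_mem (Submodule.mem_sup_left (mem_rspan.mpr ⟨f, rfl⟩))
        (Submodule.mem_sup_right (Submodule.mem_span_singleton_self g))
    · refine sup_le le_sup_left (rspan_le ?_)
      rw [hg]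
      exact sub_mem (Submodule.mem_sup_right (Submodule.mem_span_singleton_self f))
        (Submodule.mem_sup_left (mem_rspan.mpr ⟨f, rfl⟩))
  have heg : e * g = 0 := by
    rw [hg, mul_sub, ← mul_assoc, he, sub_self]
  obtain ⟨h, hh, hgh⟩ := principal_idem hreg g
  have heh : e * h = 0 := by
    have hmem : h ∈ span Rᵐᵒᵖ ({g} : Set R) := by
      rw [hgh]
      exact Submodule.mem_span_singleton_self h
    obtain ⟨c, rfl⟩ := mem_rspan.mp hmem
    rw [← mul_assoc, heg, zero_mul]
  set k := e + h - h * e with hkdef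
  have hke : k * e = e := by
    rw [hkdef, sub_mul, add_mul, he, mul_assoc, he]
    abel
  have hkh : k * h = h := by
    rw [hkdef, sub_mul, add_mul, heh, hh, mul_assoc, heh, mul_zero]
    abel
  have hkk : k * k = k := by
    calc k * k = k * e + k * h - k * (h * e) := by
          rw [hkdef]
          rw [mul_sub, mul_add]
      _ = e + h - h * e := by rw [hke, hkh, ← mul_assoc, hkh]
      _ = k := by rw [hkdef]
  refine ⟨k, hkk, ?_⟩
  rw [hstep, hgh]
  apply le_antisymm
  · exact sup_le (rspan_le (mem_rspan.mpr ⟨e, hke⟩)) (rspan_le (mem_rspan.mpr ⟨h, hkh⟩))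
  · refine rspan_le ?_
    rw [hkdef]
    exact sub_mem (add_mem (Submodule.mem_sup_left (Submodule.mem_span_singleton_self e))
        (Submodule.mem_sup_right (Submodule.mem_span_singleton_self h)))
      (Submodule.mem_sup_right (mem_rspan.mpr ⟨e, rfl⟩))

lemma fg_idem (hreg : ∀ a : R, ∃ x, a * x * a = a) (I : Submodule Rᵐᵒᵖ R)
    (hI : I.FG) : ∃ e, e * e = e ∧ I = span Rᵐᵒᵖ ({e} : Set R) := by
  refine Submodule.fg_induction
    (motive := fun J _ => ∃ e, e * e = e ∧ J = span Rᵐᵒᵖ ({e} : Set R)) ?_ ?_ I hI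
  · intro x
    obtain ⟨e, he, hsp⟩ := principal_idem hreg x
    exact ⟨e, he, hsp⟩
  · rintro p q _ _ ⟨e, he, rfl⟩ ⟨f, hf, rfl⟩
    obtain ⟨k, hk, hsp⟩ := rsup_idem hreg he hf
    exact ⟨k, hk, hsp⟩

/-- The left annihilator of a right ideal, as a left ideal. -/
def lann (J : Submodule Rᵐᵒᵖ R) : Submodule R R where
  carrier := {x | ∀ y ∈ J, x * y = 0}
  add_mem' := fun {a b} ha hb z hz => by rw [add_mul, ha z hz, hb z hz, add_zero]
  zero_mem' := fun z _ => zero_mul z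
  smul_mem' := fun c x hx z hz => by
    rw [smul_eq_mul, mul_assoc, hx z hz, mul_zero]

lemma lann_antitone {J K : Submodule Rᵐᵒᵖ R} (h : J ≤ K) : lann K ≤ lann J :=
  fun _ hx y hy => hx y (h hy)

lemma mem_lann_rspan {x e : R} :
    x ∈ lann (span Rᵐᵒᵖ ({e} : Set R)) ↔ x * e = 0 := by
  constructor
  · intro h
    exact h e (Submodule.mem_span_singleton_self e)
  · intro h y hy
    obtain ⟨c, rfl⟩ := mem_rspan.mp hy
    rw [← mul_assoc, h, zero_mul]

lemma rspan_eq_of_lann_eq {e f : R} (he : e * e = e) (hf : f * f = f)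
    (h : lann (span Rᵐᵒᵖ ({e} : Set R)) = lann (span Rᵐᵒᵖ ({f} : Set R))) :
    span Rᵐᵒᵖ ({e} : Set R) = span Rᵐᵒᵖ ({f} : Set R) := by
  have key : ∀ a b : R, a * a = a → b * b = b →
      lann (span Rᵐᵒᵖ ({a} : Set R)) = lann (span Rᵐᵒᵖ ({b} : Set R)) →
      span Rᵐᵒᵖ ({b} : Set R) ≤ span Rᵐᵒᵖ ({a} : Set R) := by
    intro a b _ hb hab
    have h1 : (1 - a) * a = 0 := by rw [sub_mul, one_mul, ‹a * a = a›, sub_self]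
    have h2 : (1 - a) ∈ lann (span Rᵐᵒᵖ ({b} : Set R)) := by
      rw [← hab]
      exact mem_lann_rspan.mpr h1
    have h3 : (1 - a) * b = 0 := mem_lann_rspan.mp h2
    rw [sub_mul, one_mul, sub_eq_zero] at h3
    exact rspan_le (mem_rspan.mpr ⟨b, h3.symm⟩)
  exact le_antisymm (key f e hf he h.symm) (key e f he hf h)

/-- The linear equivalence between `R` as a right `R`-module and `Rᵐᵒᵖ`. -/
def opE (R : Type*) [Ring R] : R ≃ₗ[Rᵐᵒᵖ] Rᵐᵒᵖ where
  toFun := MulOpposite.op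
  invFun := MulOpposite.unop
  map_add' := fun _ _ => rfl
  map_smul' := fun _ _ => rfl
  left_inv := fun _ => rfl
  right_inv := fun _ => rfl

theorem oppSemisimple [IsSemisimpleRing R] : IsSemisimpleRing Rᵐᵒᵖ := by
  have hreg : ∀ a : R, ∃ x, a * x * a = a := vnr_of_semisimple
  have hfg : ∀ I : Submodule Rᵐᵒᵖ R, I.FG := by
    intro I
    obtain ⟨L₀, hL₀S, hmin⟩ := IsArtinian.set_has_minimal
      {L : Submodule R R | ∃ J : Submodule Rᵐᵒᵖ R, J.FG ∧ J ≤ I ∧ lann J = L}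
      ⟨lann ⊥, ⊥, Submodule.fg_bot, bot_le, rfl⟩
    obtain ⟨J₀, hfg₀, hle₀, hL₀⟩ := hL₀S
    have hIJ : I ≤ J₀ := by
      intro x hx
      set J' := J₀ ⊔ span Rᵐᵒᵖ ({x} : Set R) with hJ'def
      have hfg' : J'.FG := hfg₀.sup (Submodule.fg_span_singleton x)
      have hle' : J' ≤ I := sup_le hle₀ (rspan_le hx)
      have hlann_le : lann J' ≤ L₀ := hL₀ ▸ lann_antitone le_sup_left
      have heq : lann J' = L₀ := by
        by_contra hne
        exact hmin (lann J') ⟨J', hfg', hle', rfl⟩ (lt_of_le_of_ne hlann_le hne)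
      obtain ⟨e, he, hJ₀⟩ := fg_idem hreg J₀ hfg₀
      obtain ⟨f, hfi, hJ'⟩ := fg_idem hreg J' hfg'
      have hef : span Rᵐᵒᵖ ({e} : Set R) = span Rᵐᵒᵖ ({f} : Set R) := by
        refine rspan_eq_of_lann_eq he hfi ?_
        rw [← hJ₀, ← hJ', heq, hL₀]
      have hJeq : J₀ = J' := by rw [hJ₀, hJ', ← hef]
      have : x ∈ J' := Submodule.mem_sup_right (Submodule.mem_span_singleton_self x)
      rwa [← hJeq] at this
    have hIeq : I = J₀ := le_antisymm hIJ hle₀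
    rw [hIeq]
    exact hfg₀
  have hcompl : ComplementedLattice (Submodule Rᵐᵒᵖ R) := by
    refine ⟨fun I => ?_⟩
    obtain ⟨e, he, hI⟩ := fg_idem hreg I (hfg I)
    rw [hI]
    exact idem_summand he
  exact (isSemisimpleModule_iff _ _).mpr
    ((Submodule.orderIsoMapComap (opE R)).complementedLattice_iff.mp hcompl)

end Opp

theorem stmt17 {R : Type*} [Ring R] :
    IsSemisimpleRing R ↔
    (∀ p q : Submodule Rᵐᵒᵖ (ℕ →₀ R), IsSummand p → IsSummand q →
      IsSummand (p ⊔ q)) := by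
  constructor
  · intro h p q _ _
    have : IsSemisimpleRing Rᵐᵒᵖ := oppSemisimple
    exact exists_isCompl (p ⊔ q)
  · intro H
    have H' : HasSSP Rᵐᵒᵖ (ℕ →₀ Rᵐᵒᵖ) :=
      hasSSP_congr (Finsupp.mapRange.linearEquiv (opE R)) H
    have h1 : IsSemisimpleRing Rᵐᵒᵖ := core_semisimple H'
    have h2 : IsSemisimpleRing Rᵐᵒᵖᵐᵒᵖ := oppSemisimple
    exact (RingEquiv.opOp R).symm.isSemisimpleRing
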